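/- Let ψ : ℂ → ℂ be entire with finite Segal–Bargmann norm. Then the reproducing kernel K(z,w) = e^{z·conj(w)} satisfies the reproducing property: for every w ∈ ℂ, ψ(w) = (1/π)∫_ℂ e^{w·conj(z)} ψ(z) e^{-|z|²} dA(z). -/

import Mathlib

open MeasureTheory Real Set

noncomputable section

namespace SegalBargmannAux

/-- Integrability transfer to polar coordinates, `ℝ × ℝ` version. -/
theorem integrableOn_comp_polarCoord_symm (g : ℝ × ℝ → ℂ) (hg : Integrable g) :
    IntegrableOn (fun p : ℝ × ℝ => p.1 • g (polarCoord.symm p)) polarCoord.target := by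
  set B : ℝ × ℝ → ℝ × ℝ →L[ℝ] ℝ × ℝ := fun p =>
    LinearMap.toContinuousLinearMap (Matrix.toLin (Module.Basis.finTwoProd ℝ) (Module.Basis.finTwoProd ℝ)
      !![Real.cos p.2, -p.1 * Real.sin p.2; Real.sin p.2, p.1 * Real.cos p.2]) with hB
  have B_det : ∀ p, (B p).det = p.1 := by
    intro p
    conv_rhs => rw [← one_mul p.1, ← cos_sq_add_sin_sq p.2]
    simp only [hB, neg_mul, LinearMap.det_toContinuousLinearMap, LinearMap.det_toLin,
      Matrix.det_fin_two_of, sub_neg_eq_add]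
    ring
  have h := (integrableOn_image_iff_integrableOn_abs_det_fderiv_smul volume
    polarCoord.open_target.measurableSet
    (fun p _ => (hasFDerivAt_polarCoord_symm p).hasFDerivWithinAt)
    polarCoord.symm.injOn g).mp ?_
  · refine h.congr_fun (fun p hp => ?_) polarCoord.open_target.measurableSet
    simp only [det_fderivPolarCoordSymm, abs_of_pos (show (0:ℝ) < p.1 from hp.1)]
  · rw [polarCoord.symm_image_target_eq_source]
    exact hg.integrableOn

/-- Integrability transfer to polar coordinates, complex version. -/
theorem integrableOn_comp_complex_polarCoord_symm (f : ℂ → ℂ) (hf : Integrable f) :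
    IntegrableOn (fun p : ℝ × ℝ => p.1 • f (Complex.polarCoord.symm p)) polarCoord.target := by
  have hg : Integrable (fun p : ℝ × ℝ => f (Complex.measurableEquivRealProd.symm p)) := by
    rw [← MeasurePreserving.integrable_comp_emb
      (Complex.volume_preserving_equiv_real_prod.symm)
      Complex.measurableEquivRealProd.symm.measurableEmbedding] at hf
    exact hf
  exact integrableOn_comp_polarCoord_symm
    (fun p => f (Complex.measurableEquivRealProd.symm p)) hg

theorem polarCoord_symm_eq_circleMap (r θ : ℝ) :
    Complex.polarCoord.symm (r, θ) = circleMap 0 r θ := by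
  simp [circleMap, Complex.exp_mul_I, ← Complex.ofReal_cos, ← Complex.ofReal_sin]

/-- Mean value property on circles for entire functions. -/
theorem circle_mean_value (g : ℂ → ℂ) (hg : Differentiable ℂ g) {r : ℝ} (hr : 0 < r) :
    ∫ θ in (0:ℝ)..(2*π), g (circleMap 0 r θ) = (2*(π:ℂ)) * g 0 := by
  have h := (hg.differentiableOn.diffContOnCl (s := Metric.ball (0:ℂ) r)).circleIntegral_sub_inv_smul
      (show (0:ℂ) ∈ Metric.ball 0 r by simpa using hr)
  rw [circleIntegral] at h
  have h2 : ∀ θ : ℝ,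
      deriv (circleMap 0 r) θ • (circleMap 0 r θ - 0)⁻¹ • g (circleMap 0 r θ)
        = Complex.I • g (circleMap 0 r θ) := by
    intro θ
    have hne : circleMap 0 r θ ≠ 0 := circleMap_ne_center hr.ne'
    rw [deriv_circleMap, sub_zero, smul_eq_mul, smul_eq_mul, smul_eq_mul]
    field_simp
  simp only [h2] at h
  rw [intervalIntegral.integral_smul] at h
  have hI : (Complex.I : ℂ) ≠ 0 := Complex.I_ne_zero
  rw [smul_eq_mul, smul_eq_mul] at h
  apply mul_left_cancel₀ hI
  rw [h]
  ring

/-- Mean value property, as an integral over `Ioo (-π) π`. -/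
theorem mean_value_Ioo (g : ℂ → ℂ) (hg : Differentiable ℂ g) {r : ℝ} (hr : 0 < r) :
    ∫ θ in Ioo (-π) π, g (Complex.polarCoord.symm (r, θ)) = (2*(π:ℂ)) * g 0 := by
  simp only [polarCoord_symm_eq_circleMap]
  rw [← integral_Ioc_eq_integral_Ioo,
    ← intervalIntegral.integral_of_le (by linarith [Real.pi_pos] : -π ≤ π)]
  have hper : Function.Periodic (fun θ : ℝ => g (circleMap 0 r θ)) (2*π) :=
    (periodic_circleMap 0 r).comp g
  have := hper.intervalIntegral_add_eq (-π) 0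
  simp only [zero_add] at this
  rw [show -π + 2*π = π by ring] at this
  rw [this]
  exact circle_mean_value g hg hr

/-- The Gaussian mean value property: for an entire function `g` such that
`g z * e^{-|z|²}` is integrable, the integral equals `π g 0`. -/
theorem gaussian_mean_value (g : ℂ → ℂ) (hg : Differentiable ℂ g)
    (hI : Integrable (fun z : ℂ => g z * (Real.exp (-‖z‖ ^ 2) : ℂ))) :
    ∫ z : ℂ, g z * (Real.exp (-‖z‖ ^ 2) : ℂ) = (π : ℂ) * g 0 := by
  set f : ℂ → ℂ := fun z => g z * (Real.exp (-‖z‖ ^ 2) : ℂ) with hf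
  rw [← Complex.integral_comp_polarCoord_symm f]
  have hIt := integrableOn_comp_complex_polarCoord_symm f hI
  have ht : polarCoord.target = Ioi (0:ℝ) ×ˢ Ioo (-π) π := rfl
  have hvol : (volume : Measure (ℝ×ℝ)) = (volume : Measure ℝ).prod volume := rfl
  rw [ht, hvol] at hIt ⊢
  rw [setIntegral_prod _ hIt]
  have hinner : ∀ r ∈ Ioi (0:ℝ),
      (∫ θ in Ioo (-π) π, (r:ℝ) • f (Complex.polarCoord.symm (r, θ)))
        = ((r:ℂ) * Complex.exp (-(r:ℂ)^2)) * ((2*(π:ℂ)) * g 0) := by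
    intro r hr
    rw [mem_Ioi] at hr
    have habs : ∀ θ : ℝ, ‖Complex.polarCoord.symm (r, θ)‖ = r := by
      intro θ
      rw [Complex.norm_polarCoord_symm]
      exact abs_of_pos hr
    have hpt : ∀ θ : ℝ, (r:ℝ) • f (Complex.polarCoord.symm (r, θ))
        = ((r:ℂ) * Complex.exp (-(r:ℂ)^2)) * g (Complex.polarCoord.symm (r, θ)) := by
      intro θ
      simp only [hf, habs, Complex.real_smul]
      rw [show ((Real.exp (-r^2) : ℝ) : ℂ) = Complex.exp (-(r:ℂ)^2) by
        rw [Complex.ofReal_exp]; norm_cast]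
      ring
    simp only [hpt]
    rw [MeasureTheory.integral_const_mul, mean_value_Ioo g hg hr]
  rw [setIntegral_congr_fun measurableSet_Ioi hinner, MeasureTheory.integral_mul_const]
  have hgauss : (∫ r : ℝ in Ioi 0, (r:ℂ) * Complex.exp (-(r:ℂ)^2)) = (2:ℂ)⁻¹ := by
    have := integral_mul_cexp_neg_mul_sq (b := 1) (by norm_num)
    simpa using this
  rw [hgauss]
  ring

end SegalBargmannAux

open SegalBargmannAux

/-- If `ψ : ℂ → ℂ` is entire with finite Segal–Bargmann norm, then the
reproducing kernel `K(z,w) = e^{z·conj w}` satisfies the reproducing property: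
for every `w ∈ ℂ`, `ψ(w) = (1/π) ∫_ℂ e^{w·conj z} ψ(z) e^{-|z|²} dA(z)`. -/
theorem segal_bargmann_reproducing (ψ : ℂ → ℂ)
    (hψ : Differentiable ℂ ψ)
    (hint : Integrable (fun z : ℂ => ‖ψ z‖ ^ 2 * Real.exp (-(‖z‖) ^ 2))) :
    ∀ w : ℂ,
      ψ w = (1 / (π : ℂ)) * ∫ z : ℂ,
        Complex.exp (w * (starRingEnd ℂ z)) * ψ z *
          (Real.exp (-(‖z‖) ^ 2) : ℂ) := by
  intro w
  have hψc : Continuous ψ := hψ.continuous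
  set F : ℂ → ℂ := fun z => Complex.exp (w * (starRingEnd ℂ z)) * ψ z *
    (Real.exp (-(‖z‖) ^ 2) : ℂ) with hFdef
  -- Integrability of F via Cauchy-Schwarz
  set φ : ℂ → ℂ := fun z => Complex.exp (w * (starRingEnd ℂ z)) *
    (Real.exp (-(‖z‖) ^ 2 / 2) : ℂ) with hφdef
  set f2 : ℂ → ℂ := fun z => ψ z * (Real.exp (-(‖z‖) ^ 2 / 2) : ℂ) with hf2def
  have hexp_half : ∀ z : ℂ, ((Real.exp (-(‖z‖) ^ 2 / 2) : ℝ) : ℂ) *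
      ((Real.exp (-(‖z‖) ^ 2 / 2) : ℝ) : ℂ)
        = ((Real.exp (-(‖z‖) ^ 2) : ℝ) : ℂ) := by
    intro z
    rw [← Complex.ofReal_mul, ← Real.exp_add, add_halves]
  have hFeq : F = φ • f2 := by
    funext z
    simp only [hFdef, hφdef, hf2def, Pi.smul_apply, Pi.mul_apply, smul_eq_mul]
    rw [← hexp_half z]
    ring
  have hφcont : Continuous φ := by
    apply Continuous.mul
    · exact Complex.continuous_exp.comp (continuous_const.mul (Complex.continuous_conj))
    · exact Complex.continuous_ofReal.comp
        (Real.continuous_exp.comp (((continuous_norm.pow 2).neg).div_const 2))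
  have hf2cont : Continuous f2 := by
    apply hψc.mul
    exact Complex.continuous_ofReal.comp
      (Real.continuous_exp.comp (((continuous_norm.pow 2).neg).div_const 2))
  have hf2m : MemLp f2 2 (volume : Measure ℂ) := by
    rw [memLp_two_iff_integrable_sq_norm hf2cont.aestronglyMeasurable]
    apply hint.congr
    filter_upwards with z
    simp only [hf2def, norm_mul, Complex.norm_real, Real.norm_eq_abs,
      abs_of_pos (Real.exp_pos _), mul_pow]
    congr 1
    rw [← Real.exp_nat_mul]
    push_cast
    ring
  have hφm : MemLp φ 2 (volume : Measure ℂ) := by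
    rw [memLp_two_iff_integrable_sq_norm hφcont.aestronglyMeasurable]
    -- dominating gaussian
    have hgauss : Integrable (fun z : ℂ => Real.exp (-(1/2) * ‖z‖^2)) := by
      have h1 : Integrable (fun p : ℝ × ℝ => Real.exp (-(1/2) * p.1^2) *
          Real.exp (-(1/2) * p.2^2)) :=
        Integrable.mul_prod (integrable_exp_neg_mul_sq (by norm_num : (0:ℝ) < 1/2))
          (integrable_exp_neg_mul_sq (by norm_num : (0:ℝ) < 1/2))
      rw [← MeasurePreserving.integrable_comp_emb
        (Complex.volume_preserving_equiv_real_prod.symm)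
        Complex.measurableEquivRealProd.symm.measurableEmbedding]
      apply h1.congr
      filter_upwards with p
      simp only [Function.comp_apply]
      rw [← Real.exp_add]
      congr 1
      have : ‖Complex.measurableEquivRealProd.symm p‖ ^ 2 = p.1^2 + p.2^2 := by
        have hre : (Complex.measurableEquivRealProd.symm p).re = p.1 := rfl
        have him : (Complex.measurableEquivRealProd.symm p).im = p.2 := rfl
        rw [Complex.sq_norm, Complex.normSq_apply, hre, him]
        ring
      rw [this]
      ring
    apply Integrable.mono' (hgauss.const_mul (Real.exp (2*‖w‖^2)))
    · exact ((hφcont.norm.pow 2)).aestronglyMeasurable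
    · filter_upwards with z
      rw [Real.norm_eq_abs, abs_of_nonneg (by positivity)]
      simp only [hφdef, norm_mul, Complex.norm_exp,
        Complex.norm_real, Real.norm_eq_abs, abs_of_pos (Real.exp_pos _), mul_pow]
      rw [← Real.exp_nat_mul, ← Real.exp_nat_mul, ← Real.exp_add, ← Real.exp_add]
      apply Real.exp_le_exp.mpr
      have hre : (w * (starRingEnd ℂ z)).re ≤ ‖w‖ * ‖z‖ := by
        calc (w * (starRingEnd ℂ z)).re ≤ ‖w * (starRingEnd ℂ z)‖ :=
          Complex.re_le_norm _
        _ = ‖w‖ * ‖z‖ := by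
          rw [norm_mul]
          simp
      nlinarith [norm_nonneg w, norm_nonneg z, sq_nonneg (‖z‖ - 2*‖w‖), hre]
  have hFi : Integrable F := by
    rw [hFeq, ← memLp_one_iff_integrable]
    refine hf2m.smul hφm
  -- the translated entire function
  set G : ℂ → ℂ := fun z => Complex.exp (-(z * (starRingEnd ℂ w))) * ψ (z + w) with hGdef
  have hGd : Differentiable ℂ G := by
    apply Differentiable.mul
    · apply Complex.differentiable_exp.comp
      apply Differentiable.neg
      exact (differentiable_id.mul_const _)
    · exact hψ.comp (differentiable_id.add_const w)
  have hcast : ∀ u : ℂ, ((Real.exp (-(‖u‖) ^ 2) : ℝ) : ℂ)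
      = Complex.exp (-(u * (starRingEnd ℂ u))) := by
    intro u
    rw [Complex.ofReal_exp]
    congr 1
    push_cast
    rw [← Complex.ofReal_pow, Complex.sq_norm, Complex.mul_conj]
  have key : ∀ z : ℂ, F (z + w) = G z * (Real.exp (-(‖z‖) ^ 2) : ℂ) := by
    intro z
    simp only [hFdef, hGdef, hcast, map_add]
    rw [mul_right_comm, ← Complex.exp_add, mul_right_comm, ← Complex.exp_add]
    congr 2
    ring
  have hGi : Integrable (fun z : ℂ => G z * (Real.exp (-‖z‖ ^ 2) : ℂ)) := by
    have h := hFi.comp_add_right w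
    exact h.congr (Filter.Eventually.of_forall key)
  have h1 : (∫ z : ℂ, F z) = (π : ℂ) * ψ w := by
    rw [← MeasureTheory.integral_add_right_eq_self F w]
    calc (∫ z : ℂ, F (z + w))
        = ∫ z : ℂ, G z * (Real.exp (-‖z‖ ^ 2) : ℂ) :=
          integral_congr_ae (Filter.Eventually.of_forall key)
      _ = (π : ℂ) * G 0 := gaussian_mean_value G hGd hGi
      _ = (π : ℂ) * ψ w := by simp [hGdef]
  rw [h1]
  have hπ : (π : ℂ) ≠ 0 := Complex.ofReal_ne_zero.mpr Real.pi_ne_zero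
  field_simp
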